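/- For N ≥ 5 with N ≠ 6, there exists an odd integer k with gcd(k, 2N) = 1, {k/N} < 1/2, and {k(N-4)/(2N)} + {2k/N} + {k/2} > 1. -/

import Mathlib

lemma aux_fract (N k r q t : ℤ) (hN : 0 < N) (h1 : N < 4*r) (h2 : 2*r < N)
    (hkr : k = r + q*N) (ht : k = 2*t+1) :
    Int.fract ((k : ℝ) / N) < 1 / 2 ∧
      Int.fract ((k : ℝ) * ((N : ℝ) - 4) / (2 * N)) + Int.fract (2 * (k : ℝ) / N)
        + Int.fract ((k : ℝ) / 2) > 1 := by
  have hNR : (0:ℝ) < (N:ℝ) := by exact_mod_cast hN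
  have h1R : (N:ℝ) < 4*(r:ℝ) := by exact_mod_cast h1
  have h2R : 2*(r:ℝ) < (N:ℝ) := by exact_mod_cast h2
  have hrpos : (0:ℝ) < (r:ℝ) := by nlinarith
  have e1 : (k : ℝ) / N = (r:ℝ)/N + (q : ℤ) := by
    rw [hkr]; push_cast; field_simp
  have f1 : Int.fract ((k : ℝ) / N) = (r:ℝ)/N := by
    rw [e1, Int.fract_add_intCast, Int.fract_eq_self.mpr]
    constructor
    · positivity
    · rw [div_lt_one hNR]; linarith
  have e2 : (k : ℝ) * ((N : ℝ) - 4) / (2 * N) = (3/2 - 2*(r:ℝ)/N) + ((t - 2*q - 1 : ℤ) : ℝ) := by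
    have hkR : (k:ℝ) = 2*(t:ℝ)+1 := by exact_mod_cast ht
    have hkrR : (k:ℝ) = (r:ℝ) + (q:ℝ)*(N:ℝ) := by exact_mod_cast hkr
    push_cast
    field_simp
    nlinarith [hkR, hkrR]
  have f2 : Int.fract ((k : ℝ) * ((N : ℝ) - 4) / (2 * N)) = 3/2 - 2*(r:ℝ)/N := by
    rw [e2, Int.fract_add_intCast, Int.fract_eq_self.mpr]
    constructor
    · have : 2*(r:ℝ)/N < 1 := by rw [div_lt_one hNR]; linarith
      linarith
    · have : 1/2 < 2*(r:ℝ)/N := by rw [lt_div_iff₀ hNR]; linarith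
      linarith
  have e3 : 2 * (k : ℝ) / N = 2*(r:ℝ)/N + ((2*q : ℤ) : ℝ) := by
    rw [hkr]; push_cast; field_simp
  have f3 : Int.fract (2 * (k : ℝ) / N) = 2*(r:ℝ)/N := by
    rw [e3, Int.fract_add_intCast, Int.fract_eq_self.mpr]
    constructor
    · positivity
    · rw [div_lt_one hNR]; linarith
  have e4 : (k : ℝ) / 2 = 1/2 + ((t : ℤ) : ℝ) := by
    rw [ht]; push_cast; ring
  have f4 : Int.fract ((k : ℝ) / 2) = 1/2 := by
    rw [e4, Int.fract_add_intCast, Int.fract_eq_self.mpr] <;> norm_num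
  refine ⟨?_, ?_⟩
  · rw [f1, div_lt_iff₀ hNR]; linarith
  · rw [f2, f3, f4]; ring_nf; linarith

theorem stmt_6 (N : ℕ) (hN : 5 ≤ N) (hN6 : N ≠ 6) :
    ∃ k : ℤ, Odd k ∧ Int.gcd k (2 * N) = 1 ∧
      Int.fract ((k : ℝ) / N) < 1 / 2 ∧
      Int.fract ((k : ℝ) * ((N : ℝ) - 4) / (2 * N)) + Int.fract (2 * (k : ℝ) / N)
        + Int.fract ((k : ℝ) / 2) > 1 := by
  have hcases : (∃ m : ℤ, 1 ≤ m ∧ (N:ℤ) = 4*m+3) ∨ (∃ m : ℤ, 1 ≤ m ∧ (N:ℤ) = 4*m+1) ∨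
      (∃ m : ℤ, 2 ≤ m ∧ (N:ℤ) = 4*m) ∨ (∃ m : ℤ, 2 ≤ m ∧ (N:ℤ) = 4*m+2) := by
    have h0 : (N:ℤ) % 4 = 3 ∨ (N:ℤ) % 4 = 1 ∨ (N:ℤ) % 4 = 0 ∨ (N:ℤ) % 4 = 2 := by omega
    rcases h0 with h|h|h|h
    · exact Or.inl ⟨(N:ℤ)/4, by omega, by omega⟩
    · exact Or.inr (Or.inl ⟨(N:ℤ)/4, by omega, by omega⟩)
    · exact Or.inr (Or.inr (Or.inl ⟨(N:ℤ)/4, by omega, by omega⟩))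
    · exact Or.inr (Or.inr (Or.inr ⟨(N:ℤ)/4, by omega, by omega⟩))
  have hNpos : (0:ℤ) < (N:ℤ) := by positivity
  rcases hcases with ⟨m, hm, he⟩ | ⟨m, hm, he⟩ | ⟨m, hm, he⟩ | ⟨m, hm, he⟩
  · -- N = 4m+3, k = 2m+1
    refine ⟨2*m+1, ⟨m, by ring⟩, ?_, ?_⟩
    · rw [← Int.isCoprime_iff_gcd_eq_one]
      exact ⟨4*m+1, -m, by rw [he]; ring⟩
    · exact aux_fract (N:ℤ) (2*m+1) (2*m+1) 0 m hNpos (by omega) (by omega) (by ring) (by ring)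
  · -- N = 4m+1, k = 6m+1, r = 2m, q = 1
    refine ⟨6*m+1, ⟨3*m, by ring⟩, ?_, ?_⟩
    · rw [← Int.isCoprime_iff_gcd_eq_one]
      exact ⟨12*m+1, -(9*m), by rw [he]; ring⟩
    · exact aux_fract (N:ℤ) (6*m+1) (2*m) 1 (3*m) hNpos (by omega) (by omega) (by omega) (by ring)
  · -- N = 4m, k = 2m-1
    refine ⟨2*m-1, ⟨m-1, by ring⟩, ?_, ?_⟩
    · rw [← Int.isCoprime_iff_gcd_eq_one]
      exact ⟨4*m^2-2*m-1, -(m^2-m), by rw [he]; ring⟩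
    · exact aux_fract (N:ℤ) (2*m-1) (2*m-1) 0 (m-1) hNpos (by omega) (by omega) (by ring) (by ring)
  · -- N = 4m+2, k = 2m-1
    refine ⟨2*m-1, ⟨m-1, by ring⟩, ?_, ?_⟩
    · rw [← Int.isCoprime_iff_gcd_eq_one]
      exact ⟨-(4*m^3+4*m^2+2*m+1), m^3, by rw [he]; ring⟩
    · exact aux_fract (N:ℤ) (2*m-1) (2*m-1) 0 (m-1) hNpos (by omega) (by omega) (by ring) (by ring)
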